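/- For a ∈ ℝ and p > 1, suppose v: [0,T) → (0,∞) is C² with v' > 0 on [0,T), v(t) → ∞ as t → T, and v'(t)/v(t)^{(p+1)/2} ∼ c |log(T−t)|^{a/2} as t → T for some constant c > 0. Then (2/(p−1)) v(t)^{(1−p)/2} ∼ c (T−t)|log(T−t)|^{a/2} as t → T. -/

import Mathlib

open Real Set Filter Topology

theorem stmt18 (p a T c : ℝ) (hp : 1 < p) (hT : 0 < T) (hc : 0 < c)
    (v : ℝ → ℝ) (hsmooth : ContDiffOn ℝ 2 v (Ico (0:ℝ) T))
    (hpos : ∀ t ∈ Ico (0:ℝ) T, 0 < v t)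
    (hpos' : ∀ t ∈ Ico (0:ℝ) T, 0 < deriv v t)
    (hblow : Tendsto v (nhdsWithin T (Iio T)) atTop)
    (hequiv : Tendsto (fun t : ℝ =>
        (deriv v t / (v t) ^ ((p + 1) / 2)) / (c * |Real.log (T - t)| ^ (a / 2)))
      (nhdsWithin T (Iio T)) (nhds 1)) :
    Tendsto (fun t : ℝ =>
        ((2 / (p - 1)) * (v t) ^ ((1 - p) / 2)) /
          (c * (T - t) * |Real.log (T - t)| ^ (a / 2)))
      (nhdsWithin T (Iio T)) (nhds 1) := by
  set b := max (T/2) (T - 1/2) with hbdef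
  have hbT : b < T := max_lt (by linarith) (by linarith)
  have hmem : Ioo b T ∈ 𝓝[<] T := Ioo_mem_nhdsLT_of_mem ⟨hbT, le_refl T⟩
  -- basic facts on Ioo b T
  have basics : ∀ t ∈ Ioo b T, 0 < t ∧ 0 < T - t ∧ T - t < 1 ∧
      Real.log (T - t) < 0 ∧ 0 < -Real.log (T - t) ∧
      |Real.log (T - t)| = -Real.log (T - t) := by
    intro t ht
    have ht0 : 0 < t := lt_of_lt_of_le (half_pos hT) ((le_max_left _ _).trans ht.1.le)
    have hTt : 0 < T - t := sub_pos.2 ht.2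
    have hTt1 : T - t < 1 := by
      have h2 : T - 1/2 ≤ b := le_max_right _ _
      linarith [ht.1]
    have hlog : Real.log (T - t) < 0 := Real.log_neg hTt hTt1
    exact ⟨ht0, hTt, hTt1, hlog, neg_pos.2 hlog, abs_of_neg hlog⟩
  -- T - t tends to 0 from the right
  have hsub : Tendsto (fun t => T - t) (𝓝[<] T) (𝓝[>] (0:ℝ)) := by
    refine tendsto_nhdsWithin_of_tendsto_nhds_of_eventually_within _ ?_ ?_
    · have : Tendsto (fun t : ℝ => T - t) (𝓝 T) (𝓝 (T - T)) :=
        (continuous_const.sub continuous_id).tendsto T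
      simpa using this.mono_left nhdsWithin_le_nhds
    · filter_upwards [self_mem_nhdsWithin] with t ht using sub_pos.2 (mem_Iio.1 ht)
  have hLtop : Tendsto (fun t => -Real.log (T - t)) (𝓝[<] T) atTop :=
    tendsto_neg_atBot_atTop.comp (Real.tendsto_log_nhdsGT_zero.comp hsub)
  have hw : Tendsto (fun t => (a/2) / (-Real.log (T - t))) (𝓝[<] T) (𝓝 0) :=
    tendsto_const_nhds.div_atTop hLtop
  have h1w : Tendsto (fun t => 1 - (a/2) / (-Real.log (T - t))) (𝓝[<] T) (𝓝 1) := by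
    simpa using tendsto_const_nhds.sub hw
  have hev_half : ∀ᶠ t in 𝓝[<] T, (1:ℝ)/2 < 1 - (a/2) / (-Real.log (T - t)) :=
    h1w.eventually (eventually_gt_nhds (by norm_num))
  -- numerator derivative
  have hff : ∀ᶠ t in 𝓝[<] T, HasDerivAt (fun t => (2 / (p - 1)) * (v t) ^ ((1 - p) / 2))
      (-(deriv v t / (v t) ^ ((p + 1) / 2))) t := by
    filter_upwards [hmem] with t ht
    obtain ⟨ht0, hTt, hTt1, hlog, hL, habs⟩ := basics t ht
    have htm : t ∈ Ico (0:ℝ) T := ⟨ht0.le, ht.2⟩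
    have hvpos := hpos t htm
    have hv : HasDerivAt v (deriv v t) t := by
      have h1 : ContDiffAt ℝ 2 v t := hsmooth.contDiffAt (Ico_mem_nhds ht0 ht.2)
      exact (h1.differentiableAt (by norm_num)).hasDerivAt
    have h2 := (hv.rpow_const (p := (1 - p)/2) (Or.inl hvpos.ne')).const_mul (2 / (p - 1))
    refine h2.congr_deriv ?_
    have he : (1 - p)/2 - 1 = -((p + 1)/2) := by ring
    rw [he, Real.rpow_neg hvpos.le]
    have hV : v t ^ ((p + 1)/2) ≠ 0 := (Real.rpow_pos_of_pos hvpos _).ne'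
    have hp1 : p - 1 ≠ 0 := by linarith
    field_simp [hV]
    ring
  -- denominator derivative
  have hgg : ∀ᶠ t in 𝓝[<] T, HasDerivAt (fun t => c * (T - t) * |Real.log (T - t)| ^ (a/2))
      (-(c * (-Real.log (T - t)) ^ (a/2) * (1 - (a/2) / (-Real.log (T - t))))) t := by
    filter_upwards [hmem] with t ht
    obtain ⟨ht0, hTt, hTt1, hlog, hL, habs⟩ := basics t ht
    have hd1 : HasDerivAt (fun x : ℝ => T - x) (-1) t := (hasDerivAt_id t).const_sub T
    have hd2 : HasDerivAt (fun x : ℝ => -Real.log (T - x)) ((T - t)⁻¹) t := by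
      have h := ((Real.hasDerivAt_log hTt.ne').comp t hd1).neg
      exact h.congr_deriv (by simp)
    have hd3 := hd2.rpow_const (p := a/2) (Or.inl hL.ne')
    have hd4 := (hd1.mul hd3).const_mul c
    have hev : (fun x => c * (T - x) * |Real.log (T - x)| ^ (a/2)) =ᶠ[𝓝 t]
        (fun x => c * ((T - x) * (-Real.log (T - x)) ^ (a/2))) := by
      filter_upwards [isOpen_Ioo.mem_nhds ht] with x hx
      obtain ⟨_, _, _, hlogx, _, habsx⟩ := basics x hx
      rw [habsx, mul_assoc]
    refine (HasDerivAt.congr_of_eventuallyEq ?_ hev)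
    refine hd4.congr_deriv ?_
    have h5 : (T - t) * ((T - t)⁻¹ * (a / 2) * (-Real.log (T - t)) ^ (a / 2 - 1)) =
        (a / 2) * (-Real.log (T - t)) ^ (a / 2 - 1) := by
      field_simp
    rw [h5, Real.rpow_sub hL, Real.rpow_one]
    field_simp [hL.ne']
    ring
  -- denominator derivative nonzero
  have hg' : ∀ᶠ t in 𝓝[<] T,
      (-(c * (-Real.log (T - t)) ^ (a/2) * (1 - (a/2) / (-Real.log (T - t))))) ≠ 0 := by
    filter_upwards [hmem, hev_half] with t ht hhalf
    obtain ⟨ht0, hTt, hTt1, hlog, hL, habs⟩ := basics t ht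
    have hLp : (0:ℝ) < (-Real.log (T - t)) ^ (a/2) := Real.rpow_pos_of_pos hL _
    exact neg_ne_zero.2 (mul_ne_zero (mul_ne_zero hc.ne' hLp.ne') (by linarith))
  -- numerator tends to 0
  have hfa : Tendsto (fun t => (2 / (p - 1)) * (v t) ^ ((1 - p) / 2)) (𝓝[<] T) (𝓝 0) := by
    have h0 : Tendsto (fun x : ℝ => x ^ (-((p - 1)/2))) atTop (𝓝 0) :=
      tendsto_rpow_neg_atTop (by linarith)
    have h1 := (h0.comp hblow).const_mul (2 / (p - 1))
    simpa [show (1 - p)/2 = -((p - 1)/2) by ring, Function.comp] using h1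
  -- denominator tends to 0
  have hga : Tendsto (fun t => c * (T - t) * |Real.log (T - t)| ^ (a/2)) (𝓝[<] T) (𝓝 0) := by
    have h0 := (tendsto_rpow_mul_exp_neg_mul_atTop_nhds_zero (a/2) 1 one_pos).comp hLtop
    have h1 := h0.const_mul c
    rw [mul_zero] at h1
    refine h1.congr' ?_
    filter_upwards [hmem] with t ht
    obtain ⟨ht0, hTt, hTt1, hlog, hL, habs⟩ := basics t ht
    have : Real.exp (-1 * -Real.log (T - t)) = T - t := by
      rw [neg_one_mul, neg_neg, Real.exp_log hTt]
    simp only [Function.comp]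
    rw [this, habs]
    ring
  -- ratio of derivatives tends to 1
  have hdiv : Tendsto (fun t => (-(deriv v t / (v t) ^ ((p + 1) / 2))) /
      (-(c * (-Real.log (T - t)) ^ (a/2) * (1 - (a/2) / (-Real.log (T - t)))))) (𝓝[<] T) (𝓝 1) := by
    have h2 := hequiv.div h1w one_ne_zero
    rw [div_one] at h2
    refine h2.congr' ?_
    filter_upwards [hmem] with t ht
    obtain ⟨ht0, hTt, hTt1, hlog, hL, habs⟩ := basics t ht
    simp only [Pi.div_apply, habs, neg_div_neg_eq, div_div, mul_assoc]
  exact HasDerivAt.lhopital_zero_nhdsLT hff hgg hg' hfa hga hdiv
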